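/- arXiv:1410.3767 — 5 statements merged into one kernel-verified Lean document; each statement's English description precedes it below -/
import Mathlib

section
/- For every integer k ≥ 1 there exists a 1-factorization of the complete graph K_{2k} together with a subfamily of ρ(2k) − 1 of its one-factors such that for any two distinct one-factors M, M' in this subfamily, every connected component of the spanning subgraph of K_{2k} whose edge set is M ∪ M' is a cycle of length 4. -/
/-- The Hurwitz–Radon function: writing `n = u * 2 ^ (4 * α + β)` with `u` odd and
`β ∈ {0,1,2,3}`, we set `ρ(n) = 8 * α + 2 ^ β`.  (Here `n.factorization 2` is the
2-adic valuation of `n`.) -/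
def hurwitzRadon (n : ℕ) : ℕ :=
  8 * (n.factorization 2 / 4) + 2 ^ (n.factorization 2 % 4)

set_option linter.unusedSectionVars false

namespace HRAux


variable {N r : ℕ}

def rr (m : ZMod N) : Option (ZMod N) → Option (ZMod N)
  | none => some m
  | some z => if z = m then none else some (2 * m - z)

/-- vectors over GF(2) -/
abbrev Vec (r : ℕ) := Fin r → ZMod 2

theorem vec_add_add (x h : Vec r) : x + h + h = x := by
  funext i
  simp only [Pi.add_apply, add_assoc]
  rw [CharTwo.add_self_eq_zero, add_zero]

theorem vec_add_assoc_self (x y : Vec r) : x + (x + y) = y := by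
  rw [← add_assoc]
  funext i
  simp only [Pi.add_apply]
  rw [CharTwo.add_self_eq_zero, zero_add]

theorem vec_add_ne {x h : Vec r} (hh : h ≠ 0) : x + h ≠ x := by
  intro he
  exact hh (add_left_cancel (he.trans (add_zero x).symm))

theorem zmod2_cases (δ : ZMod 2) : δ = 0 ∨ δ = 1 := by revert δ; decide

/-- vertex set -/
abbrev V (N r : ℕ) := Option (ZMod N) × Vec r

/-- parameters of "translation" factors -/
abbrev P (r : ℕ) := ZMod 2 × Vec r

/-- factor index set -/
abbrev I (N r : ℕ) := {p : P r // p ≠ 0} ⊕ ({m : ZMod N // m ≠ 0} × Vec r)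

theorem rr_involutive (m : ZMod N) : Function.Involutive (rr m) := by
  intro w
  cases w with
  | none => simp [rr]
  | some z =>
    by_cases h : z = m
    · simp [rr, h]
    · have h2 : ¬(2 * m - z = m) := fun hh => h (by linear_combination -hh)
      simp only [rr, if_neg h, if_neg h2, Option.some.injEq]
      ring

theorem two_mul_cancel (h2 : IsUnit (2 : ZMod N)) {a b : ZMod N} (h : 2 * a = 2 * b) :
    a = b := h2.mul_left_cancel h

theorem rr_ne (h2 : IsUnit (2 : ZMod N)) (m : ZMod N) (w : Option (ZMod N)) : rr m w ≠ w := by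
  cases w with
  | none => simp [rr]
  | some z =>
    by_cases h : z = m
    · simp [rr, h]
    · simp only [rr, if_neg h, ne_eq, Option.some.injEq]
      intro hh
      exact h (two_mul_cancel h2 (by linear_combination hh)).symm

theorem rr_existsUnique (h2 : IsUnit (2 : ZMod N)) {w w' : Option (ZMod N)} (hne : w ≠ w') :
    ∃! m : ZMod N, rr m w = w' := by
  cases w with
  | none =>
    cases w' with
    | none => exact absurd rfl hne
    | some z => exact ⟨z, rfl, fun m hm => by simpa [rr] using hm⟩
  | some z =>
    cases w' with
    | none =>
      refine ⟨z, by simp [rr], fun m hm => ?_⟩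
      by_cases hzm : z = m
      · exact hzm.symm
      · simp [rr, hzm] at hm
    | some z' =>
      have hzz' : z ≠ z' := fun h => hne (by rw [h])
      obtain ⟨m₀, hm₀⟩ : ∃ m₀ : ZMod N, 2 * m₀ = z + z' := by
        rcases h2 with ⟨v, hv⟩
        exact ⟨(v⁻¹ : (ZMod N)ˣ) * (z + z'), by rw [← hv]; rw [← mul_assoc]; simp⟩
      have hz : z ≠ m₀ := by
        intro h
        exact hzz' (by linear_combination 2 * h + hm₀)
      refine ⟨m₀, ?_, ?_⟩
      · simp only [rr, if_neg hz, Option.some.injEq]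
        linear_combination hm₀
      · intro m hm
        by_cases hzm : z = m
        · simp [rr, hzm] at hm
        · simp only [rr, if_neg hzm, Option.some.injEq] at hm
          exact two_mul_cancel h2 (by linear_combination hm - hm₀)


def fac : I N r → V N r → V N r
  | Sum.inl p => fun v => (if p.val.1 = 1 then rr 0 v.1 else v.1, v.2 + p.val.2)
  | Sum.inr q => fun v => (rr q.1.val v.1, v.2 + q.2)


section FacLemmas

variable (h2 : IsUnit (2 : ZMod N))
include h2

omit h2 in
theorem fac_involutive (m : I N r) : Function.Involutive (fac m) := by
  intro v
  cases m with
  | inl p =>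
    rcases zmod2_cases p.val.1 with h | h <;>
      simp [fac, h, vec_add_add, rr_involutive 0 v.1]
  | inr q => simp [fac, vec_add_add, rr_involutive q.1.val v.1]

theorem fac_ne (m : I N r) (v : V N r) : fac m v ≠ v := by
  cases m with
  | inl p =>
    rcases zmod2_cases p.val.1 with h | h
    · have hp2 : p.val.2 ≠ 0 := by
        intro h0
        exact p.prop (Prod.ext h h0)
      simp only [fac, h, if_neg (by decide : ¬((0:ZMod 2) = 1))]
      intro he
      exact vec_add_ne hp2 (congrArg Prod.snd he)
    · simp only [fac, h, if_pos rfl]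
      intro he
      exact rr_ne h2 0 v.1 (congrArg Prod.fst he)
  | inr q =>
    intro he
    exact rr_ne h2 q.1.val v.1 (congrArg Prod.fst he)

theorem fac_existsUnique {i j : V N r} (hij : i ≠ j) : ∃! m : I N r, fac m i = j := by
  obtain ⟨w, x⟩ := i
  obtain ⟨w', y⟩ := j
  have hxy : x + (x + y) = y := vec_add_assoc_self x y
  by_cases hww : w = w'
  · subst hww
    have hd : x + y ≠ 0 := by
      intro h0
      apply hij
      have : x = y := by
        have := vec_add_assoc_self x y
        rw [h0, add_zero] at this
        exact this
      rw [this]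
    refine ⟨Sum.inl ⟨(0, x + y), fun hc => hd (congrArg Prod.snd hc)⟩, ?_, ?_⟩
    · simp only [fac, if_neg (by decide : ¬((0:ZMod 2) = 1))]
      exact Prod.ext rfl hxy
    · intro m hm
      cases m with
      | inl p =>
        rcases zmod2_cases p.val.1 with h | h
        · have h2' : x + p.val.2 = y := congrArg Prod.snd hm
          have : p.val.2 = x + y := add_left_cancel (h2'.trans hxy.symm)
          congr 1
          exact Subtype.ext (Prod.ext h this)
        · exfalso
          simp only [fac, h, if_pos rfl] at hm
          exact rr_ne h2 0 w (congrArg Prod.fst hm)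
      | inr q =>
        exfalso
        exact rr_ne h2 q.1.val w (congrArg Prod.fst hm)
  · by_cases h0 : rr 0 w = w'
    · refine ⟨Sum.inl ⟨(1, x + y), fun hc => (by decide : ¬((1:ZMod 2) = 0)) (congrArg Prod.fst hc)⟩, ?_, ?_⟩
      · simp only [fac, if_pos rfl]
        exact Prod.ext h0 hxy
      · intro m hm
        cases m with
        | inl p =>
          rcases zmod2_cases p.val.1 with h | h
          · exfalso
            simp only [fac, h, if_neg (by decide : ¬((0:ZMod 2) = 1))] at hm
            exact hww (congrArg Prod.fst hm)
          · have hfst : rr 0 w = w' := by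
              have := congrArg Prod.fst hm
              simpa [fac, h] using this
            have hsnd : x + p.val.2 = y := congrArg Prod.snd hm
            have : p.val.2 = x + y := add_left_cancel (hsnd.trans hxy.symm)
            congr 1
            exact Subtype.ext (Prod.ext h this)
        | inr q =>
          exfalso
          have hfst : rr q.1.val w = w' := congrArg Prod.fst hm
          obtain ⟨m₀, hm₀, hu₀⟩ := rr_existsUnique h2 hww
          exact q.1.prop ((hu₀ q.1.val hfst).trans (hu₀ 0 h0).symm)
    · obtain ⟨m₀, hm₀, hu₀⟩ := rr_existsUnique h2 hww
      have hm0ne : m₀ ≠ 0 := fun h => h0 (h ▸ hm₀)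
      refine ⟨Sum.inr ⟨⟨m₀, hm0ne⟩, x + y⟩, Prod.ext hm₀ hxy, ?_⟩
      intro m hm
      cases m with
      | inl p =>
        exfalso
        rcases zmod2_cases p.val.1 with h | h
        · simp only [fac, h, if_neg (by decide : ¬((0:ZMod 2) = 1))] at hm
          exact hww (congrArg Prod.fst hm)
        · simp only [fac, h, if_pos rfl] at hm
          exact h0 (congrArg Prod.fst hm)
      | inr q =>
        have hfst : rr q.1.val w = w' := congrArg Prod.fst hm
        have hsnd : x + q.2 = y := congrArg Prod.snd hm
        have hq1 : q.1.val = m₀ := hu₀ q.1.val hfst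
        have hq2 : q.2 = x + y := add_left_cancel (hsnd.trans hxy.symm)
        congr 1
        exact Prod.ext (Subtype.ext hq1) hq2

theorem fac_inl_ne {p q : {p : P r // p ≠ 0}} (hpq : p ≠ q) (v : V N r) :
    fac (Sum.inl p : I N r) v ≠ fac (Sum.inl q) v := by
  intro he
  by_cases hδ : p.val.1 = q.val.1
  · have hsnd : v.2 + p.val.2 = v.2 + q.val.2 := congrArg Prod.snd he
    exact hpq (Subtype.ext (Prod.ext hδ (add_left_cancel hsnd)))
  · have hfst := congrArg Prod.fst he
    rcases zmod2_cases p.val.1 with h | h <;> rcases zmod2_cases q.val.1 with h' | h'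
    · exact hδ (h.trans h'.symm)
    · simp only [fac, h, h', if_neg (by decide : ¬((0:ZMod 2) = 1)), if_pos rfl] at hfst
      exact rr_ne h2 0 v.1 hfst.symm
    · simp only [fac, h, h', if_neg (by decide : ¬((0:ZMod 2) = 1)), if_pos rfl] at hfst
      exact rr_ne h2 0 v.1 hfst
    · exact hδ (h.trans h'.symm)

omit h2 in
theorem fac_inl_comm (p q : {p : P r // p ≠ 0}) (v : V N r) :
    fac (Sum.inl p : I N r) (fac (Sum.inl q) v) = fac (Sum.inl q) (fac (Sum.inl p) v) := by
  refine Prod.ext ?_ ?_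
  · rcases zmod2_cases p.val.1 with h | h <;> rcases zmod2_cases q.val.1 with h' | h' <;>
      simp [fac, h, h']
  · simp only [fac]
    exact add_right_comm v.2 q.val.2 p.val.2

theorem fac_inl_comp_ne {p q : {p : P r // p ≠ 0}} (hpq : p ≠ q) (v : V N r) :
    fac (Sum.inl p : I N r) (fac (Sum.inl q) v) ≠ v := by
  intro he
  by_cases hδ : p.val.1 = q.val.1
  · have hsnd : v.2 + q.val.2 + p.val.2 = v.2 := congrArg Prod.snd he
    have : p.val.2 = q.val.2 := by
      have h1 : v.2 + q.val.2 + p.val.2 = v.2 + q.val.2 + q.val.2 := by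
        rw [hsnd, vec_add_add]
      exact add_left_cancel h1
    exact hpq (Subtype.ext (Prod.ext hδ this))
  · have hfst := congrArg Prod.fst he
    rcases zmod2_cases p.val.1 with h | h <;> rcases zmod2_cases q.val.1 with h' | h'
    · exact hδ (h.trans h'.symm)
    · simp only [fac, h, h', if_neg (by decide : ¬((0:ZMod 2) = 1)), if_pos rfl] at hfst
      exact rr_ne h2 0 v.1 hfst
    · simp only [fac, h, h', if_neg (by decide : ¬((0:ZMod 2) = 1)), if_pos rfl] at hfst
      exact rr_ne h2 0 v.1 hfst
    · exact hδ (h.trans h'.symm)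

end FacLemmas


section FourCycle
variable {α : Type*}


theorem four_cycle [Finite α] (A B : α → α)
    (hAi : Function.Involutive A) (hBi : Function.Involutive B)
    (hA : ∀ v, A v ≠ v) (hB : ∀ v, B v ≠ v)
    (hAB : ∀ v, A v ≠ B v) (hABv : ∀ v, A (B v) ≠ v)
    (hcomm : ∀ v, A (B v) = B (A v)) :
    (let G : SimpleGraph α := SimpleGraph.fromRel (fun i j => A i = j ∨ B i = j);
    (∀ v, (G.neighborSet v).ncard = 2) ∧
    (∀ v, (G.connectedComponentMk v).supp.ncard = 4)) := by
  intro G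
  have hadj : ∀ i j, G.Adj i j ↔ (A i = j ∨ B i = j) := by
    intro i j
    constructor
    · rintro ⟨hne, (h | h) | (h | h)⟩
      · exact Or.inl h
      · exact Or.inr h
      · exact Or.inl (by rw [← h, hAi])
      · exact Or.inr (by rw [← h, hBi])
    · rintro (h | h)
      · exact ⟨fun he => hA i (he ▸ h), Or.inl (Or.inl h)⟩
      · exact ⟨fun he => hB i (he ▸ h), Or.inl (Or.inr h)⟩
  have hnb : ∀ v, G.neighborSet v = {A v, B v} := by
    intro v
    ext j
    simp only [SimpleGraph.mem_neighborSet, hadj, Set.mem_insert_iff, Set.mem_singleton_iff]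
    tauto
  constructor
  · intro v
    rw [hnb v]
    exact Set.ncard_pair (hAB v)
  · intro v
    have hS : (G.connectedComponentMk v).supp = {v, A v, B v, A (B v)} := by
      have hclosed : ∀ x, x ∈ ({v, A v, B v, A (B v)} : Set α) → ∀ y, G.Adj x y →
          y ∈ ({v, A v, B v, A (B v)} : Set α) := by
        intro x hx y hxy
        rw [hadj] at hxy
        simp only [Set.mem_insert_iff, Set.mem_singleton_iff] at hx ⊢
        rcases hx with rfl | rfl | rfl | rfl <;> rcases hxy with h | h <;> rw [← h]
        · tauto
        · tauto
        · rw [hAi]; tauto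
        · rw [← hcomm]; tauto
        · tauto
        · rw [hBi]; tauto
        · rw [hAi]; tauto
        · rw [hcomm, hBi]; tauto
      have hwalk : ∀ (x y : α), G.Walk x y → x ∈ ({v, A v, B v, A (B v)} : Set α) →
          y ∈ ({v, A v, B v, A (B v)} : Set α) := by
        intro x y w
        induction w with
        | nil => exact fun h => h
        | cons h p ih => exact fun hx => ih (hclosed _ hx _ h)
      ext u
      simp only [SimpleGraph.ConnectedComponent.mem_supp_iff, SimpleGraph.ConnectedComponent.eq]
      constructor
      · rintro ⟨w⟩
        exact hwalk v u w.reverse (by simp)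
      · intro hu
        have r1 : G.Reachable v (A v) :=
          SimpleGraph.Adj.reachable ((hadj v (A v)).mpr (Or.inl rfl))
        have r2 : G.Reachable v (B v) :=
          SimpleGraph.Adj.reachable ((hadj v (B v)).mpr (Or.inr rfl))
        have r3 : G.Reachable v (A (B v)) :=
          r2.trans (SimpleGraph.Adj.reachable ((hadj (B v) (A (B v))).mpr (Or.inl rfl)))
        simp only [Set.mem_insert_iff, Set.mem_singleton_iff] at hu
        rcases hu with h | h | h | h <;> rw [h]
        exacts [r1.symm, r2.symm, r3.symm]
    rw [hS]
    have h1 : v ≠ A v := fun h => hA v h.symm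
    have h2 : v ≠ B v := fun h => hB v h.symm
    have h3 : v ≠ A (B v) := fun h => hABv v h.symm
    have h4 : A v ≠ B v := hAB v
    have h5 : A v ≠ A (B v) := fun h => h2 (hAi.injective h)
    have h6 : B v ≠ A (B v) := fun h => hA (B v) h.symm
    rw [Set.ncard_insert_of_notMem (by simp [h1, h2, h3]),
      Set.ncard_insert_of_notMem (by simp [h4, h5]),
      Set.ncard_pair h6]


end FourCycle

theorem card_ne_val {α : Type*} [Fintype α] [DecidableEq α] (a : α) :
    Fintype.card {x : α // x ≠ a} = Fintype.card α - 1 := by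
  classical
  have : Fintype.card {x : α // ¬ (x = a)} = Fintype.card α - Fintype.card {x : α // x = a} :=
    Fintype.card_subtype_compl _
  simpa [Fintype.card_subtype_eq] using this

theorem hr_le (t : ℕ) : 8 * (t / 4) + 2 ^ (t % 4) ≤ 2 ^ t := by
  induction t using Nat.strong_induction_on with
  | _ t ih =>
    rcases lt_or_ge t 4 with h | h
    · interval_cases t <;> decide
    · have ih4 := ih (t - 4) (by omega)
      have e2 : t % 4 = (t - 4) % 4 := by omega
      have e3 : 2 ^ t = 16 * 2 ^ (t - 4) := by
        have hpa := pow_add 2 (t - 4) 4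
        rw [show t - 4 + 4 = t from by omega] at hpa
        rw [hpa]; ring
      have hpos : 1 ≤ 2 ^ (t - 4) := Nat.one_le_two_pow
      rw [e2, e3]
      omega

end HRAux

open HRAux

/-- For every `k ≥ 1` there is a 1-factorization of the complete graph `K_{2k}` — encoded
as a family `F` of `2k − 1` fixed-point-free involutions of the vertex set such that every
pair of distinct vertices is matched by exactly one of them — together with an injection
`s` selecting `ρ(2k) − 1` of the one-factors, such that for any two distinct selected
one-factors, in the spanning subgraph of `K_{2k}` whose edges are the union of the two
one-factors every vertex has degree 2 and every connected component has exactly 4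
vertices; i.e. every connected component is a cycle of length 4. -/
theorem exists_oneFactorization_with_square_subfamily (k : ℕ) (hk : 1 ≤ k) :
    ∃ F : Fin (2 * k - 1) → (Fin (2 * k) → Fin (2 * k)),
      (∀ m, Function.Involutive (F m)) ∧
      (∀ m i, F m i ≠ i) ∧
      (∀ i j : Fin (2 * k), i ≠ j → ∃! m, F m i = j) ∧
      ∃ s : Fin (hurwitzRadon (2 * k) - 1) → Fin (2 * k - 1),
        Function.Injective s ∧
        ∀ a b, a ≠ b →
          (let G : SimpleGraph (Fin (2 * k)) :=
            SimpleGraph.fromRel (fun i j => F (s a) i = j ∨ F (s b) i = j);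
          (∀ v, (G.neighborSet v).ncard = 2) ∧
          (∀ v, (G.connectedComponentMk v).supp.ncard = 4)) := by
  classical
  have h2k0 : 2 * k ≠ 0 := by omega
  set t := (2 * k).factorization 2 with ht_def
  have ht : 1 ≤ t := Nat.Prime.factorization_pos_of_dvd Nat.prime_two h2k0 ⟨k, rfl⟩
  set u := (2 * k) / 2 ^ t with hu_def
  have hord : 2 ^ t * u = 2 * k := Nat.ordProj_mul_ordCompl_eq_self (2 * k) 2
  have hu_odd : ¬ 2 ∣ u := Nat.not_dvd_ordCompl Nat.prime_two h2k0
  have hu1 : 1 ≤ u := Nat.ordCompl_pos 2 h2k0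
  set N := 2 * u - 1 with hN_def
  haveI : NeZero N := ⟨by omega⟩
  have hN_odd : ¬ 2 ∣ N := by omega
  have h2 : IsUnit (2 : ZMod N) := by
    have := (ZMod.isUnit_iff_coprime 2 N).mpr
      ((Nat.Prime.coprime_iff_not_dvd Nat.prime_two).mpr hN_odd)
    simpa using this
  set r := t - 1 with hr_def
  have hq : 2 ^ t = 2 * 2 ^ r := by
    rw [show t = r + 1 from by omega, pow_succ]; ring
  have hqpos : 1 ≤ 2 ^ r := Nat.one_le_two_pow
  -- cardinalities
  have hVcard : Fintype.card (V N r) = 2 * k := by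
    rw [show Fintype.card (V N r) =
        (N + 1) * 2 ^ r from by
      simp [V, Vec, Fintype.card_option, ZMod.card, Fintype.card_fun]]
    have hN1 : N + 1 = 2 * u := by omega
    calc (N + 1) * 2 ^ r = 2 * u * 2 ^ r := by rw [hN1]
      _ = 2 ^ t * u := by rw [hq]; ring
      _ = 2 * k := hord
  have hIcard : Fintype.card (I N r) = 2 * k - 1 := by
    have hc1 : Fintype.card {p : P r // p ≠ 0} = 2 * 2 ^ r - 1 := by
      rw [card_ne_val (0 : P r)]
      simp [P, Vec, ZMod.card, Fintype.card_fun]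
    have hc2 : Fintype.card ({m : ZMod N // m ≠ 0} × Vec r) = (N - 1) * 2 ^ r := by
      rw [Fintype.card_prod, card_ne_val (0 : ZMod N)]
      simp [Vec, ZMod.card, Fintype.card_fun]
    rw [show Fintype.card (I N r) =
        Fintype.card {p : P r // p ≠ 0} + Fintype.card ({m : ZMod N // m ≠ 0} × Vec r) from
      Fintype.card_sum, hc1, hc2]
    have hsub : (N - 1) * 2 ^ r = 2 * u * 2 ^ r - 2 * 2 ^ r := by
      rw [show N - 1 = 2 * u - 2 from by omega, Nat.sub_mul]
    have hbig : 2 * u * 2 ^ r = 2 * k := by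
      rw [← hord, hq]; ring
    have hmono : 2 * 2 ^ r ≤ 2 * u * 2 ^ r := by
      have := Nat.mul_le_mul_right (2 ^ r) (show 2 ≤ 2 * u from by omega)
      simpa using this
    omega
  set e : V N r ≃ Fin (2 * k) := Fintype.equivFinOfCardEq hVcard with he_def
  set idx : Fin (2 * k - 1) ≃ I N r := (Fintype.equivFinOfCardEq hIcard).symm with hidx_def
  set F : Fin (2 * k - 1) → Fin (2 * k) → Fin (2 * k) :=
    fun m i => e (fac (idx m) (e.symm i)) with hF_def
  have hFinv : ∀ m, Function.Involutive (F m) := by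
    intro m i
    simp only [hF_def, Equiv.symm_apply_apply]
    rw [fac_involutive (idx m) (e.symm i)]
    exact e.apply_symm_apply i
  have hFne : ∀ m i, F m i ≠ i := by
    intro m i h
    apply fac_ne h2 (idx m) (e.symm i)
    have := congrArg e.symm h
    simpa [hF_def] using this
  refine ⟨F, hFinv, hFne, ?_, ?_⟩
  · intro i j hij
    have hij' : e.symm i ≠ e.symm j := e.symm.injective.ne hij
    obtain ⟨m₀, h₀, hu₀⟩ := fac_existsUnique h2 hij'
    refine ⟨idx.symm m₀, ?_, ?_⟩
    · simp only [hF_def, Equiv.apply_symm_apply, h₀]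
    · intro m hm
      have hm' : fac (idx m) (e.symm i) = e.symm j := by
        have := congrArg e.symm hm
        simpa [hF_def] using this
      calc m = idx.symm (idx m) := (idx.symm_apply_apply m).symm
        _ = idx.symm m₀ := by rw [hu₀ (idx m) hm']
  · -- the selected subfamily
    have hρ : hurwitzRadon (2 * k) = 8 * (t / 4) + 2 ^ (t % 4) := rfl
    have hρle : hurwitzRadon (2 * k) ≤ 2 ^ t := by rw [hρ]; exact hr_le t
    have hcardle : Fintype.card (Fin (hurwitzRadon (2 * k) - 1)) ≤
        Fintype.card {p : P r // p ≠ 0} := by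
      rw [Fintype.card_fin, card_ne_val (0 : P r)]
      have : Fintype.card (P r) = 2 * 2 ^ r := by
        simp [P, Vec, ZMod.card, Fintype.card_fun]
      omega
    obtain ⟨emb⟩ := Function.Embedding.nonempty_of_card_le hcardle
    refine ⟨fun n => idx.symm (Sum.inl (emb n)), ?_, ?_⟩
    · intro a b hab
      have := idx.symm.injective hab
      simp only [Sum.inl.injEq] at this
      exact emb.injective this
    · intro a b hab
      have hpq : emb a ≠ emb b := fun h => hab (emb.injective h)
      have hia : idx (idx.symm (Sum.inl (emb a))) = Sum.inl (emb a) := idx.apply_symm_apply _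
      have hib : idx (idx.symm (Sum.inl (emb b))) = Sum.inl (emb b) := idx.apply_symm_apply _
      refine four_cycle (F (idx.symm (Sum.inl (emb a)))) (F (idx.symm (Sum.inl (emb b))))
        (hFinv _) (hFinv _) (hFne _) (hFne _) ?_ ?_ ?_
      · intro v h
        apply fac_inl_ne h2 hpq (e.symm v)
        have := congrArg e.symm h
        simpa [hF_def, hia, hib] using this
      · intro v h
        apply fac_inl_comp_ne h2 hpq (e.symm v)
        have := congrArg e.symm h
        simpa [hF_def, hia, hib, Equiv.symm_apply_apply] using this
      · intro v
        simp only [hF_def, hia, hib, Equiv.symm_apply_apply]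
        rw [fac_inl_comm]
end

section
/- Let Z and V be finite-dimensional real vector spaces equipped with nondegenerate symmetric bilinear forms ⟨·,·⟩_Z and ⟨·,·⟩_V, and let J : Z → End(V) be a linear map such that for every z ∈ Z: J_z² = −⟨z,z⟩_Z·id_V and ⟨J_z u, v⟩_V = −⟨u, J_z v⟩_V for all u,v ∈ V. Define a bracket on Z ⊕ V by declaring Z central, and for u,v ∈ V letting [u,v] be the unique element of Z satisfying ⟨z, [u,v]⟩_Z = ⟨J_z u, v⟩_V for all z ∈ Z (this element exists and is unique by nondegeneracy of ⟨·,·⟩_Z). Then this bracket is well defined and alternating, it makes Z ⊕ V a two-step nilpotent real Lie algebra whose center contains Z, and the operators J_z satisfy ⟨J_z u, J_z v⟩_V = ⟨z,z⟩_Z⟨u,v⟩_V for all z ∈ Z and u,v ∈ V; in particular, if Z equals the center, then Z ⊕ V with the form ⟨·,·⟩_Z + ⟨·,·⟩_V is a pseudo H-type algebra. -/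
/-- From an admissible Clifford-module structure to a pseudo H-type algebra: given
finite-dimensional real spaces `Z`, `V` with nondegenerate symmetric bilinear forms and a
linear map `J : Z → End(V)` with `J_z² = −⟨z,z⟩·id` and `J_z` skew-symmetric, there is a
unique bilinear bracket `br : V × V → Z` with `⟨z, br u v⟩ = ⟨J_z u, v⟩`; it is
alternating, and the induced bracket on `Z ⊕ V` (with `Z` central,
`[(z₁,u),(z₂,v)] = (br u v, 0)`) is antisymmetric, two-step nilpotent, satisfies the
Jacobi identity and has `Z` in its center; moreover the operators satisfy
`⟨J_z u, J_z v⟩ = ⟨z,z⟩⟨u,v⟩`. -/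
theorem pseudoHType_from_Clifford_module (Z V : Type)
    [AddCommGroup Z] [Module ℝ Z] [FiniteDimensional ℝ Z]
    [AddCommGroup V] [Module ℝ V] [FiniteDimensional ℝ V]
    (BZ : Z →ₗ[ℝ] Z →ₗ[ℝ] ℝ) (BV : V →ₗ[ℝ] V →ₗ[ℝ] ℝ)
    (hBZsymm : ∀ z w : Z, BZ z w = BZ w z)
    (hBZnd : ∀ z : Z, (∀ w : Z, BZ z w = 0) → z = 0)
    (hBVsymm : ∀ u v : V, BV u v = BV v u)
    (hBVnd : ∀ u : V, (∀ v : V, BV u v = 0) → u = 0)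
    (J : Z →ₗ[ℝ] Module.End ℝ V)
    (hJsq : ∀ z : Z, (J z) ∘ₗ (J z) = (-(BZ z z)) • (LinearMap.id : V →ₗ[ℝ] V))
    (hJskew : ∀ (z : Z) (u v : V), BV (J z u) v = - BV u (J z v)) :
    ∃ br : V →ₗ[ℝ] V →ₗ[ℝ] Z,
      (∀ (z : Z) (u v : V), BZ z (br u v) = BV (J z u) v) ∧
      (∀ br' : V →ₗ[ℝ] V →ₗ[ℝ] Z,
        (∀ (z : Z) (u v : V), BZ z (br' u v) = BV (J z u) v) → br' = br) ∧
      (∀ u : V, br u u = 0) ∧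
      (let bb : Z × V → Z × V → Z × V := fun x y => (br x.2 y.2, (0 : V));
        (∀ x y : Z × V, bb x y = - bb y x) ∧
        (∀ x y w : Z × V, bb (bb x y) w = 0) ∧
        (∀ x y w : Z × V, bb x (bb y w) + bb y (bb w x) + bb w (bb x y) = 0) ∧
        (∀ (z : Z) (x : Z × V), bb (z, (0 : V)) x = 0)) ∧
      (∀ (z : Z) (u v : V), BV (J z u) (J z v) = BZ z z * BV u v) := by
  classical
  have hBZnd' : LinearMap.BilinForm.Nondegenerate (BZ : LinearMap.BilinForm ℝ Z) :=
    ⟨hBZnd, fun y hy => hBZnd y (fun x => (hBZsymm y x).trans (hy x))⟩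
  set T := LinearMap.BilinForm.toDual (BZ : LinearMap.BilinForm ℝ Z) hBZnd' with hT
  -- the map (u, v) ↦ (z ↦ BV (J z u) v) as a bilinear map into the dual
  let f : V →ₗ[ℝ] V →ₗ[ℝ] Module.Dual ℝ Z :=
    LinearMap.mk₂ ℝ (fun u v =>
      { toFun := fun z => BV (J z u) v
        map_add' := by intro z w; simp
        map_smul' := by intro c z; simp })
      (by intro u u' v; ext z; simp)
      (by intro c u v; ext z; simp)
      (by intro u v v'; ext z; simp)
      (by intro c u v; ext z; simp)
  let br : V →ₗ[ℝ] V →ₗ[ℝ] Z :=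
    LinearMap.mk₂ ℝ (fun u v => T.symm (f u v))
      (by intro u u' v; simp [map_add])
      (by intro c u v; simp [map_smul])
      (by intro u v v'; simp [map_add])
      (by intro c u v; simp [map_smul])
  have key : ∀ (z : Z) (u v : V), BZ z (br u v) = BV (J z u) v := by
    intro z u v
    have : BZ (br u v) z = f u v z :=
      LinearMap.BilinForm.apply_toDual_symm_apply (hB := hBZnd') (f u v) z
    rw [hBZsymm]; exact this
  have huniq : ∀ br' : V →ₗ[ℝ] V →ₗ[ℝ] Z,
      (∀ (z : Z) (u v : V), BZ z (br' u v) = BV (J z u) v) → br' = br := by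
    intro br' h
    ext u v
    have : ∀ z : Z, BZ (br' u v - br u v) z = 0 := by
      intro z
      rw [map_sub, LinearMap.sub_apply, ← hBZsymm z, ← hBZsymm z, h, key, sub_self]
    have := hBZnd _ this
    have := sub_eq_zero.mp this
    exact this
  have halt : ∀ u : V, br u u = 0 := by
    intro u
    have : ∀ z : Z, BZ (br u u) z = 0 := by
      intro z
      rw [← hBZsymm z, key]
      have h1 := hJskew z u u
      have h2 : BV u (J z u) = BV (J z u) u := hBVsymm _ _
      linarith [h1, h2]
    exact hBZnd _ this
  have hanti : ∀ u v : V, br u v = - br v u := by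
    intro u v
    have h := halt (u + v)
    have h2 : br v u + br u v = 0 := by
      have := h
      simp only [map_add, LinearMap.add_apply, halt u, halt v] at this
      simpa using this
    exact eq_neg_of_add_eq_zero_right h2
  refine ⟨br, key, huniq, halt, ?_, ?_⟩
  · intro bb
    refine ⟨?_, ?_, ?_, ?_⟩
    · intro x y
      show (br x.2 y.2, (0:V)) = -(br y.2 x.2, (0:V))
      rw [Prod.neg_mk, neg_zero, ← hanti]
    · intro x y w
      show (br (0:V) w.2, (0:V)) = 0
      simp
    · intro x y w
      show (br x.2 (0:V), (0:V)) + (br y.2 (0:V), (0:V)) + (br w.2 (0:V), (0:V)) = 0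
      simp
    · intro z x
      show (br (0:V) x.2, (0:V)) = 0
      simp
  · intro z u v
    have h1 : BV (J z u) (J z v) = - BV u (J z (J z v)) := hJskew z u (J z v)
    have h2 : J z (J z v) = -(BZ z z) • v := by
      have := hJsq z
      calc J z (J z v) = ((J z) ∘ₗ (J z)) v := rfl
        _ = ((-(BZ z z)) • (LinearMap.id : V →ₗ[ℝ] V)) v := by rw [this]
        _ = -(BZ z z) • v := rfl
    rw [h1, h2, map_smul]
    simp
end

section
/- Let k ≥ 1, let e_1,…,e_{2k} be the standard basis of ℝ^{2k} with the neutral symmetric bilinear form ⟨e_i,e_j⟩ = 0 for i ≠ j, ⟨e_i,e_i⟩ = 1/k for i ≤ k and ⟨e_i,e_i⟩ = −1/k for i > k. Let p be a perfect matching of {1,…,2k} and let J : ℝ^{2k} → ℝ^{2k} be linear and skew-symmetric with respect to ⟨·,·⟩ such that for every pair (i,j) ∈ p with i < j one has ⟨J e_i, e_j⟩ = ±1/k and ⟨J e_i, e_m⟩ = 0 for all m ≠ j. If J² = λ·id for some λ ∈ {1,−1}, then exactly one of the following alternatives holds for ALL pairs (i,j) ∈ p simultaneously: either every pair (i,j)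 ∈ p satisfies (i ≤ k and j ≤ k) or (i > k and j > k) — and then λ = −1 — or every pair (i,j) ∈ p, i < j, satisfies i ≤ k < j — and then λ = 1. -/
/-- The neutral-signature symmetric bilinear form on `ℝ^{2k}` with
`⟨e_i, e_i⟩ = 1/k` for `i ≤ k` and `⟨e_i, e_i⟩ = −1/k` for `i > k`
(in 0-based indexing: `i < k`, resp. `k ≤ i`). -/
noncomputable def neutralForm (k : ℕ) (u v : Fin (2 * k) → ℝ) : ℝ :=
  ∑ i : Fin (2 * k), (if i.val < k then (1 : ℝ) / k else -(1 / k)) * u i * v i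

/-- The standard basis vector `e_i` of `ℝ^{2k}`. -/
noncomputable def stdVec (k : ℕ) (i : Fin (2 * k)) : Fin (2 * k) → ℝ :=
  Pi.single i 1

lemma nf_single_right (k : ℕ) (u : Fin (2 * k) → ℝ) (m : Fin (2 * k)) :
    neutralForm k u (stdVec k m) = (if m.val < k then (1 : ℝ) / k else -(1 / k)) * u m := by
  unfold neutralForm stdVec
  rw [Finset.sum_eq_single m]
  · simp
  · intro b _ hb; simp [Pi.single_apply, hb]
  · simp

lemma nf_single_left (k : ℕ) (v : Fin (2 * k) → ℝ) (m : Fin (2 * k)) :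
    neutralForm k (stdVec k m) v = (if m.val < k then (1 : ℝ) / k else -(1 / k)) * v m := by
  unfold neutralForm stdVec
  rw [Finset.sum_eq_single m]
  · simp [mul_comm]
  · intro b _ hb; simp [Pi.single_apply, hb]
  · simp

/-- Let `p` be a perfect matching of `{1, …, 2k}` (encoded as the fixed-point-free
involution `σ`) and `J` a skew-symmetric operator matched along `p` as stated.  If
`J² = λ·id` with `λ ∈ {1, −1}`, then exactly one of the following holds: either every
pair of the matching stays within one block of the signature split (and then `λ = −1`),
or every pair crosses the split (and then `λ = 1`). -/
theorem matching_split_dichotomy (k : ℕ) (hk : 1 ≤ k)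
    (σ : Fin (2 * k) → Fin (2 * k)) (hinv : Function.Involutive σ)
    (hfpf : ∀ a, σ a ≠ a)
    (J : (Fin (2 * k) → ℝ) →ₗ[ℝ] (Fin (2 * k) → ℝ))
    (hskew : ∀ u v, neutralForm k (J u) v = - neutralForm k u (J v))
    (hval : ∀ i, i < σ i →
      neutralForm k (J (stdVec k i)) (stdVec k (σ i)) = 1 / k ∨
      neutralForm k (J (stdVec k i)) (stdVec k (σ i)) = -(1 / k))
    (h0 : ∀ i, i < σ i → ∀ m, m ≠ σ i → neutralForm k (J (stdVec k i)) (stdVec k m) = 0)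
    (lam : ℝ) (hlam : lam = 1 ∨ lam = -1)
    (hJsq : ∀ u, J (J u) = lam • u) :
    Xor' ((∀ i, (i.val < k ↔ (σ i).val < k)) ∧ lam = -1)
         ((∀ i, i < σ i → i.val < k ∧ k ≤ (σ i).val) ∧ lam = 1) := by
  have hkpos : (0 : ℝ) < 1 / k := by
    have : (0 : ℝ) < (k : ℝ) := by exact_mod_cast hk
    positivity
  set ε : Fin (2 * k) → ℝ := fun i => if i.val < k then (1 : ℝ) / k else -(1 / k) with hε
  have hεne : ∀ i, ε i ≠ 0 := by
    intro i; simp only [hε]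
    split <;> [exact ne_of_gt hkpos; exact ne_of_lt (by linarith)]
  have key : ∀ i, i < σ i → lam * ε i = - ε (σ i) := by
    intro i hi
    set c := (J (stdVec k i)) (σ i) with hc
    have hJe : J (stdVec k i) = c • stdVec k (σ i) := by
      funext m
      by_cases hm : m = σ i
      · subst hm; simp [stdVec]; exact hc.symm
      · have h := h0 i hi m hm
        rw [nf_single_right] at h
        rcases mul_eq_zero.mp h with h' | h'
        · exact absurd h' (hεne m)
        · simp [stdVec, Pi.single_apply, hm]; exact h'
    have hc2 : c * c = 1 := by
      have h := hval i hi
      rw [nf_single_right, ← hc] at h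
      have hsq' : ((if (σ i).val < k then (1:ℝ)/k else -(1/k)) * c)^2 = ((1:ℝ)/k)^2 := by
        rcases h with h | h <;> rw [h] <;> ring
      have hε2 : ((if (σ i).val < k then (1:ℝ)/k else -(1/k)))^2 = ((1:ℝ)/k)^2 := by
        split <;> ring
      have hne : ((1:ℝ)/k)^2 ≠ 0 := pow_ne_zero 2 hkpos.ne'
      have := mul_left_cancel₀ hne
        (show ((1:ℝ)/k)^2 * (c*c) = ((1:ℝ)/k)^2 * 1 by linear_combination hsq' - c^2 * hε2)
      simpa using this
    have hsq := hJsq (stdVec k i)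
    rw [hJe, map_smul] at hsq
    have h1 : c * (J (stdVec k (σ i))) i = lam := by
      have := congrFun hsq i
      simpa [stdVec, Pi.single_apply, (hfpf i).symm, Ne.symm (hfpf i)] using this
    have h2 : ε i * (J (stdVec k (σ i))) i = -(ε (σ i) * c) := by
      have h := hskew (stdVec k (σ i)) (stdVec k i)
      rw [nf_single_right, hJe, nf_single_left] at h
      simp only [Pi.smul_apply, smul_eq_mul] at h
      have hx : (stdVec k (σ i)) (σ i) = 1 := by simp [stdVec]
      rw [hx] at h
      simpa [hε, mul_comm] using h
    linear_combination (-(ε i)) * h1 + c * h2 - (ε (σ i)) * hc2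
  rcases hlam with hl | hl
  · -- lam = 1 : crossing case
    subst hl
    have hright : ∀ i, i < σ i → i.val < k ∧ k ≤ (σ i).val := by
      intro i hi
      have h := key i hi
      rw [one_mul] at h
      by_cases h1 : i.val < k <;> by_cases h2 : (σ i).val < k <;>
        simp only [hε, h1, h2, if_true, if_false] at h ⊢
      · exact absurd h (by intro h'; nlinarith)
      · exact ⟨trivial, le_of_not_gt h2⟩
      · exact absurd (Fin.lt_def.mp hi) (by omega)
      · exact absurd h (by intro h'; nlinarith)
    right
    refine ⟨⟨hright, rfl⟩, ?_⟩
    rintro ⟨-, hbad⟩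
    norm_num at hbad
  · -- lam = -1 : same-side case
    subst hl
    have hsame : ∀ i, i.val < k ↔ (σ i).val < k := by
      have base : ∀ i, i < σ i → (ε i = ε (σ i)) := by
        intro i hi
        have h := key i hi
        linarith [h]
      have iff_of_eq : ∀ i j : Fin (2 * k), ε i = ε j → (i.val < k ↔ j.val < k) := by
        intro i j h
        by_cases h1 : i.val < k <;> by_cases h2 : j.val < k <;>
          simp only [hε, h1, h2, if_true, if_false] at h
        · simp [h1, h2]
        · exact absurd h (by nlinarith)
        · exact absurd h (by nlinarith)
        · simp [h1, h2]
      intro i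
      rcases lt_trichotomy i (σ i) with h | h | h
      · exact iff_of_eq _ _ (base i h)
      · exact absurd h.symm (hfpf i)
      · have h' : σ i < σ (σ i) := by rw [hinv i]; exact h
        have := base (σ i) h'
        rw [hinv i] at this
        exact (iff_of_eq _ _ this).symm
    left
    refine ⟨⟨hsame, rfl⟩, ?_⟩
    rintro ⟨-, hbad⟩
    norm_num at hbad
end

section
/- Let J_1 and J_2 be 2k×2k signed permutation matrices satisfying J_1² = J_2² = −I and J_1J_2 = −J_2J_1. For m = 1,2 let M_m be the perfect matching of the complete graph K_{2k} consisting of the edges {i,j} such that J_m e_i = ±e_j. Then M_1 and M_2 are edge-disjoint, and every connected component of the spanning subgraph of K_{2k} with edge set M_1 ∪ M_2 is a cycle of length 4. -/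
open Matrix

/-- A signed permutation matrix: each row and each column contains exactly one nonzero
entry, and that entry is `1` or `−1`. -/
def IsSignedPermMatrix {n : ℕ} (B : Matrix (Fin n) (Fin n) ℝ) : Prop :=
  (∀ i, ∃! j, B i j ≠ 0) ∧ (∀ j, ∃! i, B i j ≠ 0) ∧
    (∀ i j, B i j = 0 ∨ B i j = 1 ∨ B i j = -1)

/-- `MatchedBy J i j` states that the operator given by the matrix `J` maps the standard
basis vector `e_i` to `±e_j`. -/
def MatchedBy {n : ℕ} (J : Matrix (Fin n) (Fin n) ℝ) (i j : Fin n) : Prop :=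
  J.mulVec (Pi.single i 1) = Pi.single j 1 ∨ J.mulVec (Pi.single i 1) = -Pi.single j 1

lemma single_ne_neg {n : ℕ} (j l : Fin n) :
    (Pi.single j 1 : Fin n → ℝ) ≠ -Pi.single l 1 := by
  intro h
  have := congrFun h j
  simp [Pi.single_apply] at this
  split_ifs at this <;> norm_num at this

lemma single_inj {n : ℕ} {j l : Fin n}
    (h : (Pi.single j 1 : Fin n → ℝ) = Pi.single l 1) : j = l := by
  by_contra hne
  have := congrFun h j
  simp [Pi.single_apply, hne] at this

lemma matched_unique {n : ℕ} {J : Matrix (Fin n) (Fin n) ℝ} {i j l : Fin n}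
    (hj : MatchedBy J i j) (hl : MatchedBy J i l) : j = l := by
  rcases hj with hj | hj <;> rcases hl with hl | hl
  · exact single_inj (hj ▸ hl)
  · exact absurd (hj ▸ hl) (single_ne_neg j l)
  · exact absurd (hl ▸ hj) (single_ne_neg l j)
  · exact single_inj (neg_inj.mp (hj ▸ hl))

lemma sign_cases {n : ℕ} {J : Matrix (Fin n) (Fin n) ℝ} (hsq : J * J = -1)
    {i j : Fin n} (h : MatchedBy J i j) :
    (J.mulVec (Pi.single i 1) = Pi.single j 1 ∧ J.mulVec (Pi.single j 1) = -Pi.single i 1) ∨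
    (J.mulVec (Pi.single i 1) = -Pi.single j 1 ∧ J.mulVec (Pi.single j 1) = Pi.single i 1) := by
  have hsq' : J.mulVec (J.mulVec (Pi.single i 1)) = -Pi.single i 1 := by
    rw [Matrix.mulVec_mulVec, hsq, Matrix.neg_mulVec, Matrix.one_mulVec]
  rcases h with h | h
  · left
    refine ⟨h, ?_⟩
    rwa [h] at hsq'
  · right
    refine ⟨h, ?_⟩
    rw [h, Matrix.mulVec_neg] at hsq'
    exact neg_inj.mp hsq'

lemma matched_symm {n : ℕ} {J : Matrix (Fin n) (Fin n) ℝ} (hsq : J * J = -1)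
    {i j : Fin n} (h : MatchedBy J i j) : MatchedBy J j i := by
  rcases sign_cases hsq h with ⟨_, h2⟩ | ⟨_, h2⟩
  · exact Or.inr h2
  · exact Or.inl h2

lemma matched_ne {n : ℕ} {J : Matrix (Fin n) (Fin n) ℝ} (hsq : J * J = -1)
    {i j : Fin n} (h : MatchedBy J i j) : i ≠ j := by
  rintro rfl
  rcases sign_cases hsq h with ⟨h1, h2⟩ | ⟨h1, h2⟩
  · exact single_ne_neg i i (h1.symm.trans h2)
  · exact single_ne_neg i i (h2.symm.trans h1)

lemma exists_matched {n : ℕ} {J : Matrix (Fin n) (Fin n) ℝ}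
    (h : IsSignedPermMatrix J) (i : Fin n) : ∃ j, MatchedBy J i j := by
  obtain ⟨j, hj, huniq⟩ := h.2.1 i
  have hcol : J.mulVec (Pi.single i 1) = fun r => J r i := by
    funext r
    simp [Matrix.mulVec_single]
  have hzero : ∀ r, r ≠ j → J r i = 0 := by
    intro r hr
    by_contra hne
    exact hr (huniq r hne)
  refine ⟨j, ?_⟩
  rcases h.2.2 j i with h0 | h1 | hm1
  · exact absurd h0 hj
  · left
    rw [hcol]
    funext r
    by_cases hr : r = j
    · subst hr; simp [Pi.single_apply, h1]
    · simp [Pi.single_apply, hr, hzero r hr]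
  · right
    rw [hcol]
    funext r
    by_cases hr : r = j
    · subst hr; simp [Pi.single_apply, hm1]
    · simp [Pi.single_apply, hr, hzero r hr]

lemma matched_disjoint {n : ℕ} {J₁ J₂ : Matrix (Fin n) (Fin n) ℝ}
    (hsq1 : J₁ * J₁ = -1) (hsq2 : J₂ * J₂ = -1) (hanti : J₁ * J₂ = -(J₂ * J₁))
    {i j : Fin n} (ha : MatchedBy J₁ i j) (hb : MatchedBy J₂ i j) : False := by
  have key : J₁.mulVec (J₂.mulVec (Pi.single i 1)) =
      -(J₂.mulVec (J₁.mulVec (Pi.single i 1))) := by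
    rw [Matrix.mulVec_mulVec, Matrix.mulVec_mulVec, hanti, Matrix.neg_mulVec]
  rcases sign_cases hsq1 ha with ⟨ha1, ha2⟩ | ⟨ha1, ha2⟩ <;>
    rcases sign_cases hsq2 hb with ⟨hb1, hb2⟩ | ⟨hb1, hb2⟩ <;>
    (simp only [hb1, Matrix.mulVec_neg, ha1, ha2, hb2, neg_neg] at key;
     have hcoord := congrFun key i;
     simp [Pi.single_apply] at hcoord <;>
     exact absurd hcoord (by norm_num))

lemma matched_comm {n : ℕ} {J₁ J₂ : Matrix (Fin n) (Fin n) ℝ}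
    (hanti : J₁ * J₂ = -(J₂ * J₁))
    {i j l m : Fin n} (hij : MatchedBy J₁ i j) (hjl : MatchedBy J₂ j l)
    (him : MatchedBy J₂ i m) : MatchedBy J₁ m l := by
  have key : J₁.mulVec (J₂.mulVec (Pi.single i 1)) =
      -(J₂.mulVec (J₁.mulVec (Pi.single i 1))) := by
    rw [Matrix.mulVec_mulVec, Matrix.mulVec_mulVec, hanti, Matrix.neg_mulVec]
  rcases him with him | him <;> rcases hij with hij | hij <;> rcases hjl with hjl | hjl <;>
    rw [him, hij] at key <;>
    simp only [Matrix.mulVec_neg, hjl, neg_neg, neg_eq_iff_eq_neg] at key <;>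
    first
      | exact Or.inl key
      | exact Or.inr key

lemma walk_mem_of_closed {V : Type*} {G : SimpleGraph V} {S : Set V}
    (hS : ∀ a b, a ∈ S → G.Adj a b → b ∈ S) :
    ∀ {a b : V}, G.Walk a b → a ∈ S → b ∈ S := by
  intro a b w
  induction w with
  | nil => exact id
  | cons h p ih => exact fun ha => ih (hS _ _ ha h)

/-- If `J₁, J₂` are `2k × 2k` signed permutation matrices with `J₁² = J₂² = −I` and
`J₁J₂ = −J₂J₁`, then the perfect matchings `M₁, M₂` they induce (edges `{i,j}` with
`J_m e_i = ±e_j`) are edge-disjoint, and in the spanning subgraph of `K_{2k}` with edge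
set `M₁ ∪ M₂`, every vertex has degree 2 and every connected component has exactly 4
vertices; i.e. every connected component is a cycle of length 4. -/
theorem matchings_of_anticommuting_signed_perms (k : ℕ) (hk : 1 ≤ k)
    (J₁ J₂ : Matrix (Fin (2 * k)) (Fin (2 * k)) ℝ)
    (h1 : IsSignedPermMatrix J₁) (h2 : IsSignedPermMatrix J₂)
    (hsq1 : J₁ * J₁ = -1) (hsq2 : J₂ * J₂ = -1)
    (hanti : J₁ * J₂ = -(J₂ * J₁)) :
    let G : SimpleGraph (Fin (2 * k)) :=
      SimpleGraph.fromRel (fun i j => MatchedBy J₁ i j ∨ MatchedBy J₂ i j);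
    (∀ i j : Fin (2 * k), ¬(MatchedBy J₁ i j ∧ MatchedBy J₂ i j)) ∧
    (∀ v, (G.neighborSet v).ncard = 2) ∧
    (∀ v, (G.connectedComponentMk v).supp.ncard = 4) := by
  intro G
  choose s hs using exists_matched h1
  choose t ht using exists_matched h2
  -- basic facts
  have hss : ∀ i, s (s i) = i := fun i =>
    (matched_unique (hs (s i)) (matched_symm hsq1 (hs i)))
  have htt : ∀ i, t (t i) = i := fun i =>
    (matched_unique (ht (t i)) (matched_symm hsq2 (ht i)))
  have hsne : ∀ i, s i ≠ i := fun i => (matched_ne hsq1 (hs i)).symm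
  have htne : ∀ i, t i ≠ i := fun i => (matched_ne hsq2 (ht i)).symm
  have hst : ∀ i, s i ≠ t i := by
    intro i h
    exact matched_disjoint hsq1 hsq2 hanti (hs i) (h ▸ ht i)
  have hcomm : ∀ i, s (t i) = t (s i) := by
    intro i
    have := matched_comm hanti (hs i) (ht (s i)) (ht i)
    exact matched_unique (hs (t i)) this
  have hsinj : ∀ {a b}, s a = s b → a = b := by
    intro a b h
    have := congrArg s h
    rwa [hss, hss] at this
  -- adjacency characterization
  have hadj : ∀ v u, G.Adj v u ↔ u = s v ∨ u = t v := by
    intro v u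
    rw [SimpleGraph.fromRel_adj]
    constructor
    · rintro ⟨hne, (h | h) | (h | h)⟩
      · exact Or.inl (matched_unique (hs v) h).symm
      · exact Or.inr (matched_unique (ht v) h).symm
      · exact Or.inl (matched_unique (hs v) (matched_symm hsq1 h)).symm
      · exact Or.inr (matched_unique (ht v) (matched_symm hsq2 h)).symm
    · rintro (rfl | rfl)
      · exact ⟨(hsne v).symm, Or.inl (Or.inl (hs v))⟩
      · exact ⟨(htne v).symm, Or.inl (Or.inr (ht v))⟩
  refine ⟨fun i j h => matched_disjoint hsq1 hsq2 hanti h.1 h.2, ?_, ?_⟩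
  · intro v
    have : G.neighborSet v = {s v, t v} := by
      ext u
      simp [SimpleGraph.mem_neighborSet, hadj]
    rw [this]
    exact Set.ncard_pair (hst v)
  · intro v
    set S : Set (Fin (2 * k)) := {v, s v, t v, s (t v)} with hS
    have hclosed : ∀ a b, a ∈ S → G.Adj a b → b ∈ S := by
      intro a b ha hab
      rcases (hadj a b).mp hab with rfl | rfl <;>
        rcases ha with rfl | rfl | rfl | rfl <;>
        simp only [hS, Set.mem_insert_iff, Set.mem_singleton_iff, hss, htt, hcomm] <;>
        tauto
    have hsupp : (G.connectedComponentMk v).supp = S := by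
      ext u
      rw [SimpleGraph.ConnectedComponent.mem_supp_iff, SimpleGraph.ConnectedComponent.eq]
      constructor
      · intro h
        obtain ⟨w⟩ := h.symm
        exact walk_mem_of_closed hclosed w (by simp [hS])
      · intro hu
        have r1 : G.Reachable v (s v) := ((hadj v (s v)).mpr (Or.inl rfl)).reachable
        have r2 : G.Reachable v (t v) := ((hadj v (t v)).mpr (Or.inr rfl)).reachable
        have r3 : G.Reachable v (s (t v)) :=
          r2.trans ((hadj (t v) (s (t v))).mpr (Or.inl rfl)).reachable
        rcases hu with rfl | rfl | rfl | rfl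
        · exact SimpleGraph.Reachable.refl u
        · exact r1.symm
        · exact r2.symm
        · exact r3.symm
    rw [hsupp]
    have d1 : v ≠ s v := (hsne v).symm
    have d2 : v ≠ t v := (htne v).symm
    have d3 : v ≠ s (t v) := by
      intro h
      have h2 : s v = s (s (t v)) := congrArg s h
      rw [hss] at h2
      exact hst v h2
    have d4 : s v ≠ t v := hst v
    have d5 : s v ≠ s (t v) := fun h => d2 (hsinj h)
    have d6 : t v ≠ s (t v) := (hsne (t v)).symm
    rw [hS, Set.ncard_insert_of_notMem (by simp [d1, d2, d3]),
      Set.ncard_insert_of_notMem (by simp [d4, d5]), Set.ncard_pair d6]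
end

section
/- If n = h ⊕ z is a pseudo H-type algebra whose center z has dimension strictly greater than 1, then the dimension of the horizontal space h is a multiple of 4. -/
/-- A two-step nilpotent metric Lie algebra: a finite-dimensional real Lie algebra `carrier`
with `⁅⁅x,y⁆,z⁆ = 0`, equipped with a nondegenerate symmetric bilinear form `form` such that
`carrier = horizontal ⊕ center` is an orthogonal direct sum, where `center` is the center of
the Lie algebra, and the restriction of `form` to the center is nondegenerate. -/
structure TwoStepMetricLieAlgebra where
  carrier : Type
  [lieRing : LieRing carrier]
  [lieAlgebra : LieAlgebra ℝ carrier]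
  [finDim : FiniteDimensional ℝ carrier]
  form : carrier →ₗ[ℝ] carrier →ₗ[ℝ] ℝ
  horizontal : Submodule ℝ carrier
  center : Submodule ℝ carrier
  two_step : ∀ x y w : carrier, ⁅⁅x, y⁆, w⁆ = 0
  form_symm : ∀ x y : carrier, form x y = form y x
  form_nondeg : ∀ x : carrier, (∀ y : carrier, form x y = 0) → x = 0
  center_def : ∀ x : carrier, x ∈ center ↔ ∀ y : carrier, ⁅x, y⁆ = 0
  compl : IsCompl horizontal center
  orthogonal_decomp : ∀ x ∈ horizontal, ∀ y ∈ center, form x y = 0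
  form_center_nondeg : ∀ x ∈ center, (∀ y ∈ center, form x y = 0) → x = 0

attribute [instance] TwoStepMetricLieAlgebra.lieRing TwoStepMetricLieAlgebra.lieAlgebra
  TwoStepMetricLieAlgebra.finDim

/-- A pseudo H-type algebra: a two-step nilpotent metric Lie algebra whose operators
`J_z : horizontal → horizontal`, defined by `⟨J_z u, v⟩ = ⟨z, ⁅u,v⁆⟩`, satisfy the
orthogonality condition `⟨J_z u, J_z v⟩ = ⟨z,z⟩ ⟨u,v⟩`.  (The operator `J_z u` is encoded
implicitly as the element `ju ∈ horizontal` with `⟨ju, w⟩ = ⟨z, ⁅u,w⁆⟩` for all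
`w ∈ horizontal`.) -/
structure PseudoHTypeAlgebra extends TwoStepMetricLieAlgebra where
  jOrth : ∀ z ∈ center, ∀ u ∈ horizontal, ∀ v ∈ horizontal,
    ∀ ju ∈ horizontal, ∀ jv ∈ horizontal,
      (∀ w ∈ horizontal, form ju w = form z ⁅u, w⁆) →
      (∀ w ∈ horizontal, form jv w = form z ⁅v, w⁆) →
      form ju jv = form z z * form u v




open Module Matrix

/-- A nondegenerate alternating bilinear form forces even dimension. -/
lemma even_finrank_of_alt {E : Type} [AddCommGroup E] [Module ℝ E] [FiniteDimensional ℝ E]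
    (ω : LinearMap.BilinForm ℝ E) (halt : ω.IsAlt) (hnd : ω.Nondegenerate) :
    Even (finrank ℝ E) := by
  set n := finrank ℝ E with hn
  let b : Basis (Fin n) ℝ E := finBasis ℝ E
  have hdet : (LinearMap.BilinForm.toMatrix b ω).det ≠ 0 :=
    ((LinearMap.BilinForm.nondegenerate_iff_det_ne_zero b).mp hnd)
  have hskew : (LinearMap.BilinForm.toMatrix b ω)ᵀ = -(LinearMap.BilinForm.toMatrix b ω) := by
    ext i j
    simp only [Matrix.transpose_apply, Matrix.neg_apply, LinearMap.BilinForm.toMatrix_apply]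
    rw [← halt.neg_eq]
  by_contra hodd
  have h1 : (LinearMap.BilinForm.toMatrix b ω).det = ((-1) ^ n) * (LinearMap.BilinForm.toMatrix b ω).det := by
    conv_lhs => rw [← Matrix.det_transpose, hskew, Matrix.det_neg]
    simp [hn]
  rw [(Nat.not_even_iff_odd.mp hodd).neg_one_pow] at h1
  apply hdet
  linarith [h1]

/-- Two anticommuting complex structures make a real vector space a quaternion module,
hence its dimension is divisible by 4. -/
lemma four_dvd_finrank_of_quat {E : Type} [AddCommGroup E] [Module ℝ E]
    [FiniteDimensional ℝ E] (T S : Module.End ℝ E)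
    (hT : T * T = -1) (hS : S * S = -1) (hTS : T * S = -(S * T)) :
    4 ∣ finrank ℝ E := by
  let q : QuaternionAlgebra.Basis (Module.End ℝ E) (-1 : ℝ) (0 : ℝ) (-1 : ℝ) :=
    { i := T, j := S, k := T * S
      i_mul_i := by rw [hT]; simp
      j_mul_j := by rw [hS]; simp
      i_mul_j := rfl
      j_mul_i := by rw [hTS]; simp }
  let φ : Quaternion ℝ →ₐ[ℝ] Module.End ℝ E := q.liftHom
  letI : Module (Quaternion ℝ) E := Module.compHom E φ.toRingHom
  haveI : IsScalarTower ℝ (Quaternion ℝ) E := by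
    constructor
    intro r x v
    show φ (r • x) v = r • (φ x v)
    rw [_root_.map_smul]
    rfl
  have key := Module.finrank_mul_finrank ℝ (Quaternion ℝ) E
  rw [Quaternion.finrank_eq_four] at key
  exact ⟨finrank (Quaternion ℝ) E, key.symm⟩

lemma four_dvd_finrank_of_split {E : Type} [AddCommGroup E] [Module ℝ E] [FiniteDimensional ℝ E]
    (B : LinearMap.BilinForm ℝ E) (hsymm : ∀ x y, B x y = B y x)
    (hnd : ∀ x, (∀ y, B x y = 0) → x = 0)
    (T S : Module.End ℝ E)
    (hTsk : ∀ x y, B (T x) y = - B x (T y))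
    (hSsk : ∀ x y, B (S x) y = - B x (S y))
    (hT2 : ∀ x, T (T x) = x)
    (hSinj : Function.Injective S)
    (hTS : ∀ x, T (S x) = - S (T x)) :
    4 ∣ finrank ℝ E := by
  classical
  set P : Submodule ℝ E := LinearMap.ker (T - 1) with hPdef
  set N : Submodule ℝ E := LinearMap.ker (T + 1) with hNdef
  have hmemP : ∀ x : E, x ∈ P ↔ T x = x := by
    intro x
    rw [hPdef, LinearMap.mem_ker, LinearMap.sub_apply, Module.End.one_apply, sub_eq_zero]
  have hmemN : ∀ x : E, x ∈ N ↔ T x = -x := by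
    intro x
    rw [hNdef, LinearMap.mem_ker, LinearMap.add_apply, Module.End.one_apply, add_eq_zero_iff_eq_neg]
  -- IsCompl
  have hdisj : Disjoint P N := by
    rw [Submodule.disjoint_def]
    intro x hxP hxN
    have h1 := (hmemP x).mp hxP
    have h2 := (hmemN x).mp hxN
    have hx : x = -x := h1.symm.trans h2
    have h2x : (2 : ℝ) • x = 0 := by
      rw [two_smul]
      nth_rewrite 2 [hx]
      simp
    rcases smul_eq_zero.mp h2x with h | h
    · norm_num at h
    · exact h
  have hcodisj : Codisjoint P N := by
    rw [codisjoint_iff, eq_top_iff]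
    intro x _
    have hx : x = (2 : ℝ)⁻¹ • (x + T x) + (2 : ℝ)⁻¹ • (x - T x) := by
      rw [smul_add, smul_sub]
      module
    rw [hx]
    apply Submodule.add_mem_sup
    · apply Submodule.smul_mem
      rw [hmemP]
      rw [map_add, hT2]
      abel
    · apply Submodule.smul_mem
      rw [hmemN]
      rw [map_sub, hT2]
      abel
  have hcompl : IsCompl P N := ⟨hdisj, hcodisj⟩
  -- isotropy
  have hPiso : ∀ x ∈ P, ∀ y ∈ P, B x y = 0 := by
    intro x hx y hy
    have h1 : B (T x) y = - B x (T y) := hTsk x y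
    rw [(hmemP x).mp hx, (hmemP y).mp hy] at h1
    linarith
  have hNiso : ∀ x ∈ N, ∀ y ∈ N, B x y = 0 := by
    intro x hx y hy
    have h1 : B (T x) y = - B x (T y) := hTsk x y
    rw [(hmemN x).mp hx, (hmemN y).mp hy] at h1
    simp only [map_neg, LinearMap.neg_apply, neg_neg] at h1
    linarith
  -- S swaps P and N
  have hSPN : ∀ x ∈ P, S x ∈ N := by
    intro x hx
    rw [hmemN, hTS, (hmemP x).mp hx]
  have hSNP : ∀ x ∈ N, S x ∈ P := by
    intro x hx
    rw [hmemP, hTS, (hmemN x).mp hx]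
    simp
  -- equal dimensions
  have hrank : finrank ℝ P = finrank ℝ N := by
    let f1 : ↥P →ₗ[ℝ] ↥N := S.restrict hSPN
    let f2 : ↥N →ₗ[ℝ] ↥P := S.restrict hSNP
    have hf1 : Function.Injective f1 := by
      intro a b hab
      apply Subtype.ext
      apply hSinj
      simpa only [f1, LinearMap.restrict_coe_apply] using congrArg Subtype.val hab
    have hf2 : Function.Injective f2 := by
      intro a b hab
      apply Subtype.ext
      apply hSinj
      simpa only [f2, LinearMap.restrict_coe_apply] using congrArg Subtype.val hab
    exact le_antisymm (LinearMap.finrank_le_finrank_of_injective hf1)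
      (LinearMap.finrank_le_finrank_of_injective hf2)
  -- the alternating form on P
  let SP : ↥P →ₗ[ℝ] ↥N := S.restrict hSPN
  have hSPsurj : Function.Surjective SP := by
    have hinj : Function.Injective SP := by
      intro a b hab
      apply Subtype.ext
      apply hSinj
      simpa only [SP, LinearMap.restrict_coe_apply] using congrArg Subtype.val hab
    exact (LinearMap.injective_iff_surjective_of_finrank_eq_finrank hrank).mp hinj
  let ω : LinearMap.BilinForm ℝ ↥P :=
    B.compl₁₂ P.subtype (S ∘ₗ P.subtype)
  have hω_apply : ∀ u v : ↥P, ω u v = B (u : E) (S (v : E)) := fun u v => rfl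
  have hωalt : ω.IsAlt := by
    intro u
    rw [hω_apply]
    have h1 : B (S (u : E)) (u : E) = - B (u : E) (S (u : E)) := hSsk _ _
    have h2 : B ((u : E)) (S (u : E)) = B (S (u : E)) (u : E) := hsymm _ _
    linarith
  have hωnd : ω.Nondegenerate := by
    refine (LinearMap.IsRefl.nondegenerate_iff_separatingLeft hωalt.isRefl).mpr ?_
    intro u hu
    have hBu : ∀ w : E, B (u : E) w = 0 := by
      intro w
      have hw : w ∈ P ⊔ N := by
        rw [hcodisj.eq_top]
        trivial
      rcases Submodule.mem_sup.mp hw with ⟨p, hp, n, hn, rfl⟩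
      rw [map_add]
      have hBp : B (u : E) p = 0 := hPiso _ u.2 _ hp
      have hBn : B (u : E) n = 0 := by
        rcases hSPsurj ⟨n, hn⟩ with ⟨v, hv⟩
        have : S (v : E) = n := congrArg Subtype.val hv
        rw [← this]
        exact hu v
      rw [hBp, hBn, add_zero]
    have : (u : E) = 0 := hnd _ hBu
    exact Subtype.ext this
  have heven : Even (finrank ℝ ↥P) := even_finrank_of_alt ω hωalt hωnd
  rcases heven with ⟨k, hk⟩
  have hsum : finrank ℝ P + finrank ℝ N = finrank ℝ E :=
    Submodule.finrank_add_eq_of_isCompl hcompl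
  refine ⟨k, ?_⟩
  omega

namespace PseudoHTypeAlgebra

variable (A : PseudoHTypeAlgebra)

/-- The restriction of the form to the horizontal space. -/
noncomputable def BH : LinearMap.BilinForm ℝ ↥A.horizontal :=
  A.form.compl₁₂ A.horizontal.subtype A.horizontal.subtype

lemma BH_apply (u v : ↥A.horizontal) : A.BH u v = A.form (u : A.carrier) (v : A.carrier) := rfl

lemma BH_symm (u v : ↥A.horizontal) : A.BH u v = A.BH v u := A.form_symm _ _

lemma BH_nondeg : (A.BH).Nondegenerate := by
  refine (LinearMap.IsRefl.nondegenerate_iff_separatingLeft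
    (fun x y hxy => by rwa [A.BH_symm] at hxy)).mpr ?_
  intro x hx
  have hall : ∀ y : A.carrier, A.form (x : A.carrier) y = 0 := by
    intro y
    have hy : y ∈ A.horizontal ⊔ A.center := by
      rw [A.compl.codisjoint.eq_top]; trivial
    rcases Submodule.mem_sup.mp hy with ⟨p, hp, q, hq, rfl⟩
    rw [map_add]
    have h1 : A.form (x : A.carrier) p = 0 := hx ⟨p, hp⟩
    have h2 : A.form (x : A.carrier) q = 0 := A.orthogonal_decomp _ x.2 _ hq
    rw [h1, h2, add_zero]
  exact Subtype.ext (A.form_nondeg _ hall)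

/-- The bilinear map `(u, w) ↦ ⟨z, [u, w]⟩` on the horizontal space. -/
noncomputable def braF (z : A.carrier) :
    ↥A.horizontal →ₗ[ℝ] ↥A.horizontal →ₗ[ℝ] ℝ :=
  LinearMap.mk₂ ℝ (fun u w => A.form z ⁅(u : A.carrier), (w : A.carrier)⁆)
    (by intro m m' w; simp only [Submodule.coe_add, add_lie, map_add])
    (by intro c m w; simp only [Submodule.coe_smul, smul_lie, _root_.map_smul, smul_eq_mul])
    (by intro m w w'; simp only [Submodule.coe_add, lie_add, map_add])
    (by intro c m w; simp only [Submodule.coe_smul, lie_smul, _root_.map_smul, smul_eq_mul])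

/-- The operator `J_z` on the horizontal space. -/
noncomputable def J (z : A.carrier) : Module.End ℝ ↥A.horizontal :=
  (((A.BH).toDual A.BH_nondeg).symm : Module.Dual ℝ ↥A.horizontal →ₗ[ℝ] ↥A.horizontal) ∘ₗ
    A.braF z

lemma J_apply (z : A.carrier) (u w : ↥A.horizontal) :
    A.BH (A.J z u) w = A.form z ⁅(u : A.carrier), (w : A.carrier)⁆ := by
  show A.BH (((A.BH).toDual A.BH_nondeg).symm (A.braF z u)) w = _
  rw [LinearMap.BilinForm.apply_toDual_symm_apply]
  rfl

lemma ext_BH {a b : ↥A.horizontal} (h : ∀ w, A.BH a w = A.BH b w) : a = b := by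
  have : ∀ w, A.BH (a - b) w = 0 := by
    intro w
    rw [map_sub, LinearMap.sub_apply, h w, sub_self]
  have := A.BH_nondeg.1 _ this
  exact sub_eq_zero.mp this

end PseudoHTypeAlgebra

namespace PseudoHTypeAlgebra

variable (A : PseudoHTypeAlgebra)

lemma J_skew (z : A.carrier) (u v : ↥A.horizontal) :
    A.BH (A.J z u) v = - A.BH u (A.J z v) := by
  rw [J_apply, A.BH_symm u (A.J z v), J_apply]
  rw [← lie_skew]
  rw [map_neg]

lemma J_orth {z : A.carrier} (hz : z ∈ A.center) (u v : ↥A.horizontal) :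
    A.BH (A.J z u) (A.J z v) = A.form z z * A.BH u v := by
  exact A.jOrth z hz u u.2 v v.2 (A.J z u) (A.J z u).2 (A.J z v) (A.J z v).2
    (fun w hw => A.J_apply z u ⟨w, hw⟩)
    (fun w hw => A.J_apply z v ⟨w, hw⟩)

lemma J_add (z z' : A.carrier) : A.J (z + z') = A.J z + A.J z' := by
  ext u : 1
  apply A.ext_BH
  intro w
  rw [J_apply, map_add, LinearMap.add_apply, LinearMap.add_apply, map_add,
    LinearMap.add_apply, J_apply, J_apply]

lemma J_smul (c : ℝ) (z : A.carrier) : A.J (c • z) = c • A.J z := by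
  ext u : 1
  apply A.ext_BH
  intro w
  simp only [LinearMap.smul_apply, _root_.map_smul, smul_eq_mul, A.J_apply]

lemma J_polar {z z' : A.carrier} (hz : z ∈ A.center) (hz' : z' ∈ A.center)
    (u v : ↥A.horizontal) :
    A.BH (A.J z u) (A.J z' v) + A.BH (A.J z' u) (A.J z v) =
      (A.form z z' + A.form z' z) * A.BH u v := by
  have h := A.J_orth (A.center.add_mem hz hz') u v
  rw [J_add] at h
  simp only [LinearMap.add_apply, map_add] at h
  linear_combination h - A.J_orth hz u v - A.J_orth hz' u v

lemma J_sq {z : A.carrier} (hz : z ∈ A.center) (u : ↥A.horizontal) :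
    A.J z (A.J z u) = -(A.form z z) • u := by
  apply A.ext_BH
  intro w
  rw [A.J_skew z (A.J z u) w, A.J_orth hz u w, _root_.map_smul, LinearMap.smul_apply]
  rw [smul_eq_mul]
  ring

lemma J_anti {z z' : A.carrier} (hz : z ∈ A.center) (hz' : z' ∈ A.center)
    (horth : A.form z z' = 0) (u : ↥A.horizontal) :
    A.J z (A.J z' u) = - A.J z' (A.J z u) := by
  have hp : ∀ v : ↥A.horizontal,
      A.BH (A.J z u) (A.J z' v) + A.BH (A.J z' u) (A.J z v) = 0 := by
    intro v
    rw [A.J_polar hz hz' u v, horth, A.form_symm z' z, horth]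
    ring
  apply A.ext_BH
  intro w
  have h1 : A.BH (A.J z (A.J z' u)) w = - A.BH (A.J z' u) (A.J z w) := A.J_skew z _ w
  have h2 : A.BH (A.J z' (A.J z u)) w = - A.BH (A.J z u) (A.J z' w) := A.J_skew z' _ w
  rw [h1, map_neg, LinearMap.neg_apply, h2]
  have := hp w
  linarith

end PseudoHTypeAlgebra

namespace PseudoHTypeAlgebra

variable (A : PseudoHTypeAlgebra)

lemma exists_pair (h : 1 < Module.finrank ℝ A.center) :
    ∃ z1 ∈ A.center, ∃ z2 ∈ A.center,
      A.form z1 z1 ≠ 0 ∧ A.form z2 z2 ≠ 0 ∧ A.form z1 z2 = 0 := by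
  by_cases hall : ∀ z ∈ A.center, A.form z z = 0
  · exfalso
    have hzero : ∀ x ∈ A.center, x = 0 := by
      intro x hx
      apply A.form_center_nondeg x hx
      intro y hy
      have h1 := hall _ (A.center.add_mem hx hy)
      have h2 := hall _ hx
      have h3 := hall _ hy
      have hsym := A.form_symm x y
      simp only [map_add, LinearMap.add_apply] at h1
      linarith
    have hbot : A.center = ⊥ := by
      rw [Submodule.eq_bot_iff]; exact hzero
    rw [hbot] at h
    simp at h
  · push_neg at hall
    obtain ⟨z1, hz1, ha⟩ := hall
    by_cases hW : ∃ z2 ∈ A.center, A.form z1 z2 = 0 ∧ A.form z2 z2 ≠ 0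
    · obtain ⟨z2, hz2, horth, hb⟩ := hW
      exact ⟨z1, hz1, z2, hz2, ha, hb, horth⟩
    · exfalso
      push_neg at hW
      have key : ∀ y : A.carrier,
          A.form z1 (y - (A.form z1 y / A.form z1 z1) • z1) = 0 := by
        intro y
        rw [map_sub, _root_.map_smul, smul_eq_mul]
        field_simp
        ring
      have hWiso : ∀ w ∈ A.center, A.form z1 w = 0 →
          ∀ w' ∈ A.center, A.form z1 w' = 0 → A.form w w' = 0 := by
        intro w hw hw1 w' hw' hw1'
        have hsum : A.form z1 (w + w') = 0 := by
          rw [map_add, hw1, hw1', add_zero]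
        have h1 := hW _ (A.center.add_mem hw hw') hsum
        have h2 := hW w hw hw1
        have h3 := hW w' hw' hw1'
        have hsym := A.form_symm w w'
        simp only [map_add, LinearMap.add_apply] at h1
        linarith
      have hWzero : ∀ w ∈ A.center, A.form z1 w = 0 → w = 0 := by
        intro w hw hw1
        apply A.form_center_nondeg w hw
        intro y hy
        set c := A.form z1 y / A.form z1 z1 with hc
        have hy' : y - c • z1 ∈ A.center :=
          A.center.sub_mem hy (A.center.smul_mem _ hz1)
        have h0 := hWiso w hw hw1 _ hy' (key y)
        have hwz1 : A.form w z1 = 0 := by rw [A.form_symm]; exact hw1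
        have hexp : A.form w y = A.form w (y - c • z1) + c * A.form w z1 := by
          rw [map_sub, _root_.map_smul, smul_eq_mul]
          ring
        rw [hexp, h0, hwz1]
        ring
      have hle : A.center ≤ Submodule.span ℝ {z1} := by
        intro x hx
        set c := A.form z1 x / A.form z1 z1 with hc
        have hx' : x - c • z1 ∈ A.center :=
          A.center.sub_mem hx (A.center.smul_mem _ hz1)
        have hx0 := hWzero _ hx' (key x)
        have : x = c • z1 := by
          have := sub_eq_zero.mp hx0
          exact this
        rw [this]
        exact Submodule.smul_mem _ _ (Submodule.mem_span_singleton_self z1)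
      have hz1ne : z1 ≠ 0 := by
        intro hz
        apply ha
        rw [hz]
        simp
      have hfr := Submodule.finrank_mono (R := ℝ) (M := A.carrier) hle
      rw [finrank_span_singleton hz1ne] at hfr
      omega

lemma J_inj {z : A.carrier} (hz : z ∈ A.center) (hzz : A.form z z ≠ 0) :
    Function.Injective (A.J z) := by
  intro x y hxy
  have h1 : A.J z (A.J z x) = A.J z (A.J z y) := by rw [hxy]
  rw [A.J_sq hz, A.J_sq hz] at h1
  have hne : -(A.form z z) ≠ 0 := neg_ne_zero.mpr hzz
  exact smul_right_injective _ hne h1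

lemma split_of_neg {z1 z2 : A.carrier} (hz1 : z1 ∈ A.center) (hz2 : z2 ∈ A.center)
    (ha : A.form z1 z1 < 0) (hb : A.form z2 z2 ≠ 0) (hab : A.form z1 z2 = 0) :
    4 ∣ Module.finrank ℝ ↥A.horizontal := by
  set a := A.form z1 z1 with ha_def
  have hna : (0 : ℝ) < -a := by linarith
  set s : ℝ := (Real.sqrt (-a))⁻¹ with hs_def
  have hs2 : s ^ 2 * (-a) = 1 := by
    rw [hs_def, inv_pow, Real.sq_sqrt hna.le]
    exact inv_mul_cancel₀ (ne_of_gt hna)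
  set T : Module.End ℝ ↥A.horizontal := s • A.J z1 with hT_def
  set S : Module.End ℝ ↥A.horizontal := A.J z2 with hS_def
  refine four_dvd_finrank_of_split A.BH (fun x y => A.BH_symm x y) A.BH_nondeg.1 T S
    ?_ ?_ ?_ ?_ ?_
  · intro x y
    simp only [hT_def, LinearMap.smul_apply, _root_.map_smul, smul_eq_mul]
    rw [A.J_skew z1 x y]
    ring
  · intro x y
    exact A.J_skew z2 x y
  · intro x
    simp only [hT_def, LinearMap.smul_apply, _root_.map_smul]
    rw [A.J_sq hz1, smul_smul, smul_smul]
    have h1 : s * s * -((A.form z1) z1) = 1 := by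
      rw [← ha_def]
      linear_combination hs2
    rw [h1, one_smul]
  · exact A.J_inj hz2 hb
  · intro x
    simp only [hT_def, hS_def, LinearMap.smul_apply]
    rw [A.J_anti hz1 hz2 hab x, _root_.map_smul, smul_neg]

lemma quat_of_pos {z1 z2 : A.carrier} (hz1 : z1 ∈ A.center) (hz2 : z2 ∈ A.center)
    (ha : 0 < A.form z1 z1) (hb : 0 < A.form z2 z2) (hab : A.form z1 z2 = 0) :
    4 ∣ Module.finrank ℝ ↥A.horizontal := by
  set s1 : ℝ := (Real.sqrt (A.form z1 z1))⁻¹ with hs1_def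
  set s2 : ℝ := (Real.sqrt (A.form z2 z2))⁻¹ with hs2_def
  have hsq1 : s1 * s1 * ((A.form z1) z1) = 1 := by
    rw [hs1_def, ← mul_inv, Real.mul_self_sqrt ha.le]
    exact inv_mul_cancel₀ (ne_of_gt ha)
  have hsq2 : s2 * s2 * ((A.form z2) z2) = 1 := by
    rw [hs2_def, ← mul_inv, Real.mul_self_sqrt hb.le]
    exact inv_mul_cancel₀ (ne_of_gt hb)
  set T : Module.End ℝ ↥A.horizontal := s1 • A.J z1 with hT_def
  set S : Module.End ℝ ↥A.horizontal := s2 • A.J z2 with hS_def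
  refine four_dvd_finrank_of_quat T S ?_ ?_ ?_
  · apply LinearMap.ext
    intro x
    simp only [hT_def, Module.End.mul_apply, LinearMap.smul_apply, _root_.map_smul,
      LinearMap.neg_apply, Module.End.one_apply]
    rw [A.J_sq hz1, smul_smul, smul_smul]
    have h1 : s1 * s1 * -((A.form z1) z1) = -1 := by linear_combination -hsq1
    rw [h1, neg_one_smul]
  · apply LinearMap.ext
    intro x
    simp only [hS_def, Module.End.mul_apply, LinearMap.smul_apply, _root_.map_smul,
      LinearMap.neg_apply, Module.End.one_apply]
    rw [A.J_sq hz2, smul_smul, smul_smul]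
    have h1 : s2 * s2 * -((A.form z2) z2) = -1 := by linear_combination -hsq2
    rw [h1, neg_one_smul]
  · apply LinearMap.ext
    intro x
    simp only [hT_def, hS_def, Module.End.mul_apply, LinearMap.smul_apply, _root_.map_smul,
      LinearMap.neg_apply, smul_smul]
    rw [A.J_anti hz1 hz2 hab x, smul_neg, mul_comm]

end PseudoHTypeAlgebra

/-- If the center of a pseudo H-type algebra has dimension greater than 1, then the
dimension of the horizontal space is a multiple of 4. -/
theorem pseudoHType_horizontal_dim_multiple_of_four (A : PseudoHTypeAlgebra)
    (h : 1 < Module.finrank ℝ A.center) :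
    4 ∣ Module.finrank ℝ A.horizontal := by
  obtain ⟨z1, hz1, z2, hz2, ha, hb, hab⟩ := A.exists_pair h
  rcases lt_or_gt_of_ne ha with ha' | ha'
  · exact A.split_of_neg hz1 hz2 ha' hb hab
  rcases lt_or_gt_of_ne hb with hb' | hb'
  · have hba : A.form z2 z1 = 0 := by rw [A.form_symm]; exact hab
    exact A.split_of_neg hz2 hz1 hb' (ne_of_gt ha') hba
  · exact A.quat_of_pos hz1 hz2 ha' hb' hab
end
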